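/- arXiv:2106.12051 — 2 statements merged into one kernel-verified Lean document; each statement's English description precedes it below -/
import Mathlib

section
/- If g(c·M·e^{(β+γ+ρ)+(γ+ρ)+ρ}) is integrable, then g(c·M)·R_1·R_2·R_3 is integrable and E[g(c·M)·R_1·R_2·R_3] = E[g(c·M·e^{(β+γ+ρ)+(γ+ρ)+ρ})]·e^{(γ+ρ)+2ρ}. (That is, E[g(F_T)·(M_T/M_{t_i})·(M_T/M_{t_j})·(M_T/M_{t_l})] = E[g(F_T·e^{∫_{t_i}^{T}σ² + ∫_{t_j}^{T}σ² + ∫_{t_l}^{T}σ²})]·e^{∫_{max(t_i,t_j)}^{T}σ² + ∫_{max(t_i,t_l)}^{T}σ² + ∫_{max(t_j,t_l)}^{T}σ²} for dividend dates t_i ≤ t_j ≤ t_l.) -/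
open MeasureTheory ProbabilityTheory Real
open scoped NNReal ENNReal

lemma gauss_tilt (v : ℝ≥0) (k : ℝ) :
    (gaussianReal 0 v).withDensity
        (fun x => ENNReal.ofReal (Real.exp (k * x - k ^ 2 * v / 2)))
      = (gaussianReal 0 v).map (· + k * v) := by
  classical
  by_cases hv : v = 0
  · subst hv
    rw [gaussianReal_zero_var]
    have hmap : (Measure.dirac (0 : ℝ)).map (· + k * ((0 : ℝ≥0) : ℝ)) = Measure.dirac 0 := by
      rw [Measure.map_dirac' (show Measurable fun x : ℝ => x + k * ((0 : ℝ≥0) : ℝ) by fun_prop)]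
      simp
    rw [hmap]
    ext s hs
    rw [withDensity_apply _ hs, setLIntegral_dirac' (by fun_prop) hs]
    by_cases h0s : (0 : ℝ) ∈ s
    · simp [h0s, Measure.dirac_apply' _ hs, Set.indicator_of_mem h0s]
    · simp [h0s, Measure.dirac_apply' _ hs, Set.indicator_of_notMem h0s]
  · rw [gaussianReal_map_add_const (k * v), zero_add, gaussianReal_of_var_ne_zero _ hv,
      gaussianReal_of_var_ne_zero _ hv, ← withDensity_mul _ (measurable_gaussianPDF _ _)
        (by fun_prop)]
    congr 1
    funext x
    simp only [Pi.mul_apply, gaussianPDF_def]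
    rw [← ENNReal.ofReal_mul (gaussianPDFReal_nonneg _ _ _)]
    congr 1
    rw [gaussianPDFReal, gaussianPDFReal, mul_assoc, ← Real.exp_add]
    congr 2
    have hv' : ((v : ℝ)) ≠ 0 := by exact_mod_cast hv
    field_simp
    ring

lemma tilt_step {Ω E : Type*} [MeasurableSpace Ω] [MeasurableSpace E] (P : Measure Ω)
    [IsProbabilityMeasure P] (W : Ω → E) (V : Ω → ℝ) (hW : Measurable W) (hV : Measurable V)
    (hindep : IndepFun W V P) (v : ℝ≥0) (hVlaw : Measure.map V P = gaussianReal 0 v)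
    (F : E × ℝ → ℝ) (hF : Measurable F) (k : ℝ) :
    (Integrable (fun ω => F (W ω, V ω) * Real.exp (k * V ω)) P ↔
      Integrable (fun ω => F (W ω, V ω + k * v)) P) ∧
    ∫ ω, F (W ω, V ω) * Real.exp (k * V ω) ∂P
      = Real.exp (k ^ 2 * v / 2) * ∫ ω, F (W ω, V ω + k * v) ∂P := by
  have hpair : Measurable fun ω => (W ω, V ω) := hW.prodMk hV
  set C : ℝ := k ^ 2 * v / 2 with hC
  set ν : Measure E := Measure.map W P with hν
  haveI : IsProbabilityMeasure ν := Measure.isProbabilityMeasure_map hW.aemeasurable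
  set μpr : Measure (E × ℝ) := ν.prod (gaussianReal 0 v) with hμpr
  have hmap : Measure.map (fun ω => (W ω, V ω)) P = μpr := by
    rw [hμpr, hν, ← hVlaw]
    exact (indepFun_iff_map_prod_eq_prod_map_map hW.aemeasurable hV.aemeasurable).mp hindep
  set T : E × ℝ → E × ℝ := fun p => (p.1, p.2 + k * v) with hT
  have hTmeas : Measurable T := by fun_prop
  set D : E × ℝ → ℝ≥0 := fun p => (Real.exp (k * p.2 - C)).toNNReal with hD
  have hDmeas : Measurable D := by fun_prop
  have hDcoe : ∀ p, (D p : ℝ) = Real.exp (k * p.2 - C) :=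
    fun p => Real.coe_toNNReal _ (Real.exp_nonneg _)
  -- the tilted gaussian is a probability measure (hence sigma-finite)
  haveI : IsProbabilityMeasure ((gaussianReal 0 v).withDensity
      (fun x => ENNReal.ofReal (Real.exp (k * x - C)))) := by
    rw [hC, gauss_tilt]
    exact Measure.isProbabilityMeasure_map (by fun_prop)
  -- product withDensity identity
  have h1 : ν.prod ((gaussianReal 0 v).withDensity
        (fun x => ENNReal.ofReal (Real.exp (k * x - C))))
      = μpr.withDensity (fun p => ((D p : ℝ≥0∞))) := by
    refine Measure.prod_eq fun s t hs ht => ?_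
    calc (μpr.withDensity fun p => ((D p : ℝ≥0∞))) (s ×ˢ t)
        = ∫⁻ p in s ×ˢ t, (D p : ℝ≥0∞) ∂μpr := withDensity_apply _ (hs.prod ht)
      _ = ∫⁻ x, ∫⁻ y, ((D (x, y) : ℝ≥0∞))
            ∂((gaussianReal 0 v).restrict t) ∂(ν.restrict s) := by
          rw [hμpr, ← Measure.prod_restrict, lintegral_prod _ (by fun_prop)]
      _ = ∫⁻ _, (∫⁻ y in t, ENNReal.ofReal (Real.exp (k * y - C))
            ∂(gaussianReal 0 v)) ∂(ν.restrict s) := rfl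
      _ = (∫⁻ y in t, ENNReal.ofReal (Real.exp (k * y - C)) ∂(gaussianReal 0 v)) * ν s := by
          rw [lintegral_const, Measure.restrict_apply_univ]
      _ = ν s * ((gaussianReal 0 v).withDensity
            (fun x => ENNReal.ofReal (Real.exp (k * x - C)))) t := by
          rw [withDensity_apply _ ht, mul_comm]
  have h2 : ν.prod ((gaussianReal 0 v).map (· + k * v)) = μpr.map T := by
    have h := Measure.map_prod_map ν (gaussianReal 0 v) measurable_id
      (show Measurable fun x : ℝ => x + k * v by fun_prop)
    rw [Measure.map_id] at h
    exact h
  have hprod : μpr.withDensity (fun p => ((D p : ℝ≥0∞))) = μpr.map T := by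
    rw [← h1, hC, gauss_tilt, h2]
  -- pointwise identity
  have hpt : ∀ p : E × ℝ, F p * Real.exp (k * p.2) = Real.exp C * ((D p : ℝ) * F p) := by
    intro p
    rw [hDcoe, ← mul_assoc, ← Real.exp_add, show C + (k * p.2 - C) = k * p.2 by ring, mul_comm]
  -- integrability transfer
  have hiff : Integrable (fun ω => F (W ω, V ω) * Real.exp (k * V ω)) P ↔
      Integrable (fun ω => F (W ω, V ω + k * v)) P := by
    calc Integrable (fun ω => F (W ω, V ω) * Real.exp (k * V ω)) P
        ↔ Integrable (fun p : E × ℝ => F p * Real.exp (k * p.2)) μpr := by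
          rw [← hmap, integrable_map_measure
            ((show Measurable fun p : E × ℝ => F p * Real.exp (k * p.2) from hF.mul (by fun_prop : Measurable fun p : E × ℝ =>
              Real.exp (k * p.2))).aestronglyMeasurable) hpair.aemeasurable]
          exact Iff.rfl
      _ ↔ Integrable (fun p : E × ℝ => Real.exp C * ((D p : ℝ) * F p)) μpr :=
          integrable_congr (ae_of_all _ hpt)
      _ ↔ Integrable (fun p : E × ℝ => (D p : ℝ) * F p) μpr := by
          rw [show (fun p : E × ℝ => Real.exp C * ((D p : ℝ) * F p))
              = fun p : E × ℝ => Real.exp C • ((D p : ℝ) * F p) from rfl]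
          exact integrable_smul_iff (Real.exp_ne_zero C) _
      _ ↔ Integrable F (μpr.withDensity (fun p => ((D p : ℝ≥0∞)))) := by
          rw [integrable_withDensity_iff_integrable_smul hDmeas]
          simp_rw [NNReal.smul_def, smul_eq_mul]
      _ ↔ Integrable (fun p : E × ℝ => F (T p)) μpr := by
          rw [hprod, integrable_map_measure hF.aestronglyMeasurable hTmeas.aemeasurable]
          exact Iff.rfl
      _ ↔ Integrable (fun ω => F (W ω, V ω + k * v)) P := by
          rw [← hmap, integrable_map_measure
            (show AEStronglyMeasurable (fun p : E × ℝ => F (T p))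
                (Measure.map (fun ω => (W ω, V ω)) P) from
              (hF.comp hTmeas).aestronglyMeasurable) hpair.aemeasurable]
          exact Iff.rfl
  refine ⟨hiff, ?_⟩
  calc ∫ ω, F (W ω, V ω) * Real.exp (k * V ω) ∂P
      = ∫ p : E × ℝ, F p * Real.exp (k * p.2) ∂μpr := by
        rw [← hmap, integral_map hpair.aemeasurable
          ((show Measurable fun p : E × ℝ => F p * Real.exp (k * p.2) from hF.mul (by fun_prop : Measurable fun p : E × ℝ =>
            Real.exp (k * p.2))).aestronglyMeasurable)]
    _ = ∫ p : E × ℝ, Real.exp C * ((D p : ℝ) * F p) ∂μpr := by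
        exact integral_congr_ae (ae_of_all _ hpt)
    _ = Real.exp C * ∫ p : E × ℝ, (D p : ℝ) * F p ∂μpr := integral_const_mul _ _
    _ = Real.exp C * ∫ p, F p ∂(μpr.withDensity (fun p => ((D p : ℝ≥0∞)))) := by
        rw [integral_withDensity_eq_integral_smul hDmeas]
        simp_rw [NNReal.smul_def, smul_eq_mul]
    _ = Real.exp C * ∫ p, F (T p) ∂μpr := by
        rw [hprod, integral_map hTmeas.aemeasurable hF.aestronglyMeasurable]
    _ = Real.exp C * ∫ ω, F (W ω, V ω + k * v) ∂P := by
        rw [← hmap, integral_map hpair.aemeasurable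
          (show AEStronglyMeasurable (fun p : E × ℝ => F (T p))
              (Measure.map (fun ω => (W ω, V ω)) P) from
            (hF.comp hTmeas).aestronglyMeasurable)]

lemma indep_triple {Ω : Type*} [MeasurableSpace Ω] {P : Measure Ω}
    {f : Fin 4 → Ω → ℝ} (hindep : iIndepFun f P)
    (hmeas : ∀ i, Measurable (f i)) {i j l m : Fin 4}
    (h1 : i ≠ m) (h2 : j ≠ m) (h3 : l ≠ m) :
    IndepFun (fun ω => (f i ω, f j ω, f l ω)) (f m) P := by
  classical
  have h := hindep.indepFun_finset {i, j, l} {m}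
    (by simp [Finset.disjoint_singleton_right, h1.symm, h2.symm, h3.symm]) hmeas
  have hφ : Measurable (fun p : ({i, j, l} : Finset (Fin 4)) → ℝ =>
      (p ⟨i, by simp⟩, p ⟨j, by simp⟩, p ⟨l, by simp⟩)) := by fun_prop
  have hψ : Measurable (fun p : ({m} : Finset (Fin 4)) → ℝ => p ⟨m, by simp⟩) := by fun_prop
  exact h.comp hφ hψ

/-- With `M = e^{X+Y+Z+U−(α+β+γ+ρ)/2}`, `R₁ = e^{Y+Z+U−(β+γ+ρ)/2}`,
`R₂ = e^{Z+U−(γ+ρ)/2}`, `R₃ = e^{U−ρ/2}` for independent centered Gaussians `X, Y, Z, U`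
of variances `α, β, γ, ρ`: if `g(c·M·e^{(β+γ+ρ)+(γ+ρ)+ρ})` is integrable, then
`g(c·M)·R₁·R₂·R₃` is integrable and
`E[g(c·M)·R₁·R₂·R₃] = E[g(c·M·e^{(β+γ+ρ)+(γ+ρ)+ρ})]·e^{(γ+ρ)+2ρ}`. -/
theorem statement6 {Ω : Type*} [MeasurableSpace Ω] (P : Measure Ω) [IsProbabilityMeasure P]
    (α β γ ρ : ℝ) (hα : 0 ≤ α) (hβ : 0 ≤ β) (hγ : 0 ≤ γ) (hρ : 0 ≤ ρ)
    (X Y Z U : Ω → ℝ) (hX : Measurable X) (hY : Measurable Y) (hZ : Measurable Z)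
    (hU : Measurable U)
    (hindep : iIndepFun ![X, Y, Z, U] P)
    (hXlaw : Measure.map X P = gaussianReal 0 α.toNNReal)
    (hYlaw : Measure.map Y P = gaussianReal 0 β.toNNReal)
    (hZlaw : Measure.map Z P = gaussianReal 0 γ.toNNReal)
    (hUlaw : Measure.map U P = gaussianReal 0 ρ.toNNReal)
    (g : ℝ → ℝ) (hg : Measurable g) (c : ℝ)
    (hInt : Integrable
      (fun ω => g (c * Real.exp (X ω + Y ω + Z ω + U ω - (α + β + γ + ρ) / 2)
        * Real.exp ((β + γ + ρ) + (γ + ρ) + ρ))) P) :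
    Integrable
        (fun ω => g (c * Real.exp (X ω + Y ω + Z ω + U ω - (α + β + γ + ρ) / 2))
          * Real.exp (Y ω + Z ω + U ω - (β + γ + ρ) / 2)
          * Real.exp (Z ω + U ω - (γ + ρ) / 2) * Real.exp (U ω - ρ / 2)) P ∧
      ∫ ω, g (c * Real.exp (X ω + Y ω + Z ω + U ω - (α + β + γ + ρ) / 2))
          * Real.exp (Y ω + Z ω + U ω - (β + γ + ρ) / 2)
          * Real.exp (Z ω + U ω - (γ + ρ) / 2) * Real.exp (U ω - ρ / 2) ∂P
        = (∫ ω, g (c * Real.exp (X ω + Y ω + Z ω + U ω - (α + β + γ + ρ) / 2)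
            * Real.exp ((β + γ + ρ) + (γ + ρ) + ρ)) ∂P) * Real.exp ((γ + ρ) + 2 * ρ) := by
  have hmeas : ∀ i, Measurable (![X, Y, Z, U] i) := by
    intro i
    fin_cases i <;> simpa
  have hβ' : ((β.toNNReal : ℝ)) = β := Real.coe_toNNReal β hβ
  have hγ' : ((γ.toNNReal : ℝ)) = γ := Real.coe_toNNReal γ hγ
  have hρ' : ((ρ.toNNReal : ℝ)) = ρ := Real.coe_toNNReal ρ hρ
  set s0 : ℝ := (α + β + γ + ρ) / 2 with hs0
  set b1 : ℝ := (β + γ + ρ) / 2 with hb1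
  set b2 : ℝ := (γ + ρ) / 2 with hb2
  set b3 : ℝ := ρ / 2 with hb3
  -- the three F's
  set F₁ : (ℝ × ℝ × ℝ) × ℝ → ℝ := fun q =>
    g (c * Real.exp (q.1.1 + q.1.2.1 + q.1.2.2 + q.2 - s0))
      * Real.exp (q.1.2.1 + q.1.2.2 - b1) * Real.exp (q.1.2.2 - b2) * Real.exp (-b3) with hF₁def
  set F₂ : (ℝ × ℝ × ℝ) × ℝ → ℝ := fun q =>
    g (c * Real.exp (q.1.1 + q.1.2.1 + q.2 + q.1.2.2 + 3 * ρ - s0))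
      * Real.exp (q.1.2.1 - b1) * Real.exp (-b2) * Real.exp (-b3) with hF₂def
  set F₃ : (ℝ × ℝ × ℝ) × ℝ → ℝ := fun q =>
    g (c * Real.exp (q.1.1 + q.2 + q.1.2.1 + 2 * γ + q.1.2.2 + 3 * ρ - s0))
      * Real.exp (-b1) * Real.exp (-b2) * Real.exp (-b3) with hF₃def
  have hF₁ : Measurable F₁ := by fun_prop
  have hF₂ : Measurable F₂ := by fun_prop
  have hF₃ : Measurable F₃ := by fun_prop
  -- independence
  have hi₁ : IndepFun (fun ω => (X ω, Y ω, Z ω)) U P :=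
    indep_triple hindep hmeas (i := 0) (j := 1) (l := 2) (m := 3)
      (by decide) (by decide) (by decide)
  have hi₂ : IndepFun (fun ω => (X ω, Y ω, U ω)) Z P :=
    indep_triple hindep hmeas (i := 0) (j := 1) (l := 3) (m := 2)
      (by decide) (by decide) (by decide)
  have hi₃ : IndepFun (fun ω => (X ω, Z ω, U ω)) Y P :=
    indep_triple hindep hmeas (i := 0) (j := 2) (l := 3) (m := 1)
      (by decide) (by decide) (by decide)
  -- the three steps
  have hstep1 := tilt_step P (fun ω => (X ω, Y ω, Z ω)) U (by fun_prop) hU hi₁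
    ρ.toNNReal hUlaw F₁ hF₁ 3
  have hstep2 := tilt_step P (fun ω => (X ω, Y ω, U ω)) Z (by fun_prop) hZ hi₂
    γ.toNNReal hZlaw F₂ hF₂ 2
  have hstep3 := tilt_step P (fun ω => (X ω, Z ω, U ω)) Y (by fun_prop) hY hi₃
    β.toNNReal hYlaw F₃ hF₃ 1
  rw [hρ'] at hstep1
  rw [hγ'] at hstep2
  rw [hβ'] at hstep3
  -- pointwise identities
  have eq1 : (fun ω => g (c * Real.exp (X ω + Y ω + Z ω + U ω - s0))
        * Real.exp (Y ω + Z ω + U ω - b1)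
        * Real.exp (Z ω + U ω - b2) * Real.exp (U ω - b3))
      = fun ω => F₁ ((X ω, Y ω, Z ω), U ω) * Real.exp (3 * U ω) := by
    funext ω
    simp only [hF₁def, mul_assoc, ← Real.exp_add]
    ring_nf
  have eq2 : (fun ω => F₁ ((X ω, Y ω, Z ω), U ω + 3 * ρ))
      = fun ω => F₂ ((X ω, Y ω, U ω), Z ω) * Real.exp (2 * Z ω) := by
    funext ω
    simp only [hF₁def, hF₂def, mul_assoc, ← Real.exp_add]
    ring_nf
  have eq3 : (fun ω => F₂ ((X ω, Y ω, U ω), Z ω + 2 * γ))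
      = fun ω => F₃ ((X ω, Z ω, U ω), Y ω) * Real.exp (1 * Y ω) := by
    funext ω
    simp only [hF₂def, hF₃def, mul_assoc, ← Real.exp_add]
    ring_nf
  have eq4 : (fun ω => F₃ ((X ω, Z ω, U ω), Y ω + 1 * β))
      = fun ω => Real.exp (-b1 - b2 - b3)
          * g (c * Real.exp (X ω + Y ω + Z ω + U ω - s0)
            * Real.exp ((β + γ + ρ) + (γ + ρ) + ρ)) := by
    funext ω
    simp only [hF₃def, mul_assoc, ← Real.exp_add]
    ring_nf
  -- integrability chain
  have hM4 : Integrable (fun ω => F₃ ((X ω, Z ω, U ω), Y ω + 1 * β)) P := by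
    rw [eq4]
    exact hInt.const_mul _
  have hM3 : Integrable (fun ω => F₂ ((X ω, Y ω, U ω), Z ω + 2 * γ)) P := by
    rw [eq3]
    exact hstep3.1.mpr hM4
  have hM2 : Integrable (fun ω => F₁ ((X ω, Y ω, Z ω), U ω + 3 * ρ)) P := by
    rw [eq2]
    exact hstep2.1.mpr hM3
  have hL : Integrable (fun ω => g (c * Real.exp (X ω + Y ω + Z ω + U ω - s0))
      * Real.exp (Y ω + Z ω + U ω - b1)
      * Real.exp (Z ω + U ω - b2) * Real.exp (U ω - b3)) P := by
    rw [eq1]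
    exact hstep1.1.mpr hM2
  refine ⟨hL, ?_⟩
  calc ∫ ω, g (c * Real.exp (X ω + Y ω + Z ω + U ω - s0))
        * Real.exp (Y ω + Z ω + U ω - b1)
        * Real.exp (Z ω + U ω - b2) * Real.exp (U ω - b3) ∂P
      = ∫ ω, F₁ ((X ω, Y ω, Z ω), U ω) * Real.exp (3 * U ω) ∂P := by rw [eq1]
    _ = Real.exp (3 ^ 2 * ρ / 2) * ∫ ω, F₁ ((X ω, Y ω, Z ω), U ω + 3 * ρ) ∂P := hstep1.2
    _ = Real.exp (3 ^ 2 * ρ / 2) * ∫ ω, F₂ ((X ω, Y ω, U ω), Z ω) * Real.exp (2 * Z ω) ∂P := by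
        rw [eq2]
    _ = Real.exp (3 ^ 2 * ρ / 2) * (Real.exp (2 ^ 2 * γ / 2)
          * ∫ ω, F₂ ((X ω, Y ω, U ω), Z ω + 2 * γ) ∂P) := by rw [hstep2.2]
    _ = Real.exp (3 ^ 2 * ρ / 2) * (Real.exp (2 ^ 2 * γ / 2)
          * ∫ ω, F₃ ((X ω, Z ω, U ω), Y ω) * Real.exp (1 * Y ω) ∂P) := by rw [eq3]
    _ = Real.exp (3 ^ 2 * ρ / 2) * (Real.exp (2 ^ 2 * γ / 2) * (Real.exp (1 ^ 2 * β / 2)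
          * ∫ ω, F₃ ((X ω, Z ω, U ω), Y ω + 1 * β) ∂P)) := by rw [hstep3.2]
    _ = Real.exp (3 ^ 2 * ρ / 2) * (Real.exp (2 ^ 2 * γ / 2) * (Real.exp (1 ^ 2 * β / 2)
          * (Real.exp (-b1 - b2 - b3)
            * ∫ ω, g (c * Real.exp (X ω + Y ω + Z ω + U ω - s0)
              * Real.exp ((β + γ + ρ) + (γ + ρ) + ρ)) ∂P))) := by
        rw [eq4, integral_const_mul]
    _ = (∫ ω, g (c * Real.exp (X ω + Y ω + Z ω + U ω - s0)
          * Real.exp ((β + γ + ρ) + (γ + ρ) + ρ)) ∂P) * Real.exp ((γ + ρ) + 2 * ρ) := by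
        have hconst : Real.exp ((γ + ρ) + 2 * ρ)
            = Real.exp (3 ^ 2 * ρ / 2) * (Real.exp (2 ^ 2 * γ / 2)
              * (Real.exp (1 ^ 2 * β / 2) * Real.exp (-b1 - b2 - b3))) := by
          simp only [← Real.exp_add]
          congr 1
          rw [hb1, hb2, hb3]
          ring
        rw [hconst]
        ring
end

section
/- For every k > 0 (with f, v, B, η fixed), the map k ↦ V_B(f, k) is twice differentiable at k with second derivative (B/(k·v))·φ(d_2(f, k)); equivalently, the map k ↦ −η·B·Φ(η·d_2(f, k)) has derivative (B/(k·v))·φ(d_2(f, k)) at k. -/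
/-- Standard normal density `φ`. -/
noncomputable def nPDF (x : ℝ) : ℝ := (Real.sqrt (2 * Real.pi))⁻¹ * Real.exp (-(x ^ 2) / 2)

/-- Standard normal cumulative distribution function `Φ`. -/
noncomputable def nCDF (x : ℝ) : ℝ := ∫ t in Set.Iic x, nPDF t

/-- `d_1(f, k) = ln(f/k)/v + v/2`. -/
noncomputable def dOne (v f k : ℝ) : ℝ := Real.log (f / k) / v + v / 2

/-- `d_2(f, k) = d_1(f, k) − v`. -/
noncomputable def dTwo (v f k : ℝ) : ℝ := dOne v f k - v

/-- Black formula `V_B(f, k) = η·B·(f·Φ(η·d_1(f,k)) − k·Φ(η·d_2(f,k)))`. -/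
noncomputable def blackFormula (v B η f k : ℝ) : ℝ :=
  η * B * (f * nCDF (η * dOne v f k) - k * nCDF (η * dTwo v f k))

lemma continuous_nPDF : Continuous nPDF := by
  unfold nPDF; fun_prop

lemma integrable_nPDF : MeasureTheory.Integrable nPDF := by
  have h := integrable_exp_neg_mul_sq (show (0:ℝ) < 1/2 by norm_num)
  have : nPDF = fun x => (Real.sqrt (2 * Real.pi))⁻¹ * Real.exp (-(1/2) * x ^ 2) := by
    funext x; unfold nPDF; ring_nf
  rw [this]
  exact h.const_mul _

lemma hasDerivAt_nCDF (x : ℝ) : HasDerivAt nCDF (nPDF x) x := by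
  have hrepr : ∀ y : ℝ, nCDF y = nCDF 0 + ∫ t in (0:ℝ)..y, nPDF t := by
    intro y
    have := intervalIntegral.integral_Iic_sub_Iic
      (integrable_nPDF.integrableOn (s := Set.Iic 0))
      (integrable_nPDF.integrableOn (s := Set.Iic y))
    unfold nCDF; linarith [this]
  have h : HasDerivAt (fun y => nCDF 0 + ∫ t in (0:ℝ)..y, nPDF t) (nPDF x) x := by
    exact (intervalIntegral.integral_hasDerivAt_right
      (integrable_nPDF.intervalIntegrable)
      (continuous_nPDF.stronglyMeasurableAtFilter _ _)
      continuous_nPDF.continuousAt).const_add _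
  exact h.congr_of_eventuallyEq (Filter.Eventually.of_forall hrepr)

lemma nPDF_even (η x : ℝ) (hη : η = 1 ∨ η = -1) : nPDF (η * x) = nPDF x := by
  rcases hη with h | h <;> simp [h, nPDF]

lemma key_identity (f k v : ℝ) (hf : 0 < f) (hk : 0 < k) (hv : 0 < v) :
    f * nPDF (dOne v f k) = k * nPDF (dTwo v f k) := by
  have hL : -(dOne v f k) ^ 2 / 2 = -(dTwo v f k) ^ 2 / 2 + Real.log (k / f) := by
    have hlog : Real.log (k / f) = -Real.log (f / k) := by
      rw [← Real.log_inv, inv_div]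
    rw [hlog]; unfold dTwo dOne; field_simp; ring
  unfold nPDF
  rw [hL, Real.exp_add, Real.exp_log (div_pos hk hf)]
  field_simp

lemma hasDerivAt_dTwo (f k v : ℝ) (hf : 0 < f) (hk : 0 < k) (hv : 0 < v) :
    HasDerivAt (fun x => dTwo v f x) (-(1 / (k * v))) k := by
  have h1 : HasDerivAt (fun x : ℝ => (Real.log f - Real.log x) / v + v / 2 - v)
      (-(1 / (k * v))) k := by
    have := ((Real.hasDerivAt_log hk.ne').const_sub (Real.log f)).div_const v
    have h := (this.add_const (v / 2)).sub_const v
    refine h.congr_deriv ?_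
    field_simp
  refine h1.congr_of_eventuallyEq ?_
  filter_upwards [eventually_gt_nhds hk] with x hx
  unfold dTwo dOne
  rw [Real.log_div hf.ne' hx.ne']

lemma hasDerivAt_dOne (f k v : ℝ) (hf : 0 < f) (hk : 0 < k) (hv : 0 < v) :
    HasDerivAt (fun x => dOne v f x) (-(1 / (k * v))) k := by
  have h := (hasDerivAt_dTwo f k v hf hk hv).add_const v
  refine h.congr_of_eventuallyEq ?_
  filter_upwards with x
  unfold dTwo; ring

lemma black_first_deriv (f k v B η : ℝ) (hf : 0 < f) (hk : 0 < k) (hv : 0 < v)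
    (hη : η = 1 ∨ η = -1) :
    HasDerivAt (fun x : ℝ => blackFormula v B η f x)
      (-η * B * nCDF (η * dTwo v f k)) k := by
  set D : ℝ := -(1 / (k * v)) with hD
  have h1 : HasDerivAt (fun x => nCDF (η * dOne v f x)) (nPDF (η * dOne v f k) * (η * D)) k :=
    (hasDerivAt_nCDF _).comp k ((hasDerivAt_dOne f k v hf hk hv).const_mul η)
  have h2 : HasDerivAt (fun x => nCDF (η * dTwo v f x)) (nPDF (η * dTwo v f k) * (η * D)) k :=
    (hasDerivAt_nCDF _).comp k ((hasDerivAt_dTwo f k v hf hk hv).const_mul η)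
  have hprod : HasDerivAt (fun x => x * nCDF (η * dTwo v f x))
      (1 * nCDF (η * dTwo v f k) + k * (nPDF (η * dTwo v f k) * (η * D))) k :=
    (hasDerivAt_id k).mul h2
  have htot := ((h1.const_mul f).sub hprod).const_mul (η * B)
  have hfun : (fun x => η * B * (f * nCDF (η * dOne v f x) - x * nCDF (η * dTwo v f x)))
      = fun x : ℝ => blackFormula v B η f x := by
    funext x; unfold blackFormula; ring
  simp only [Pi.sub_apply] at htot; rw [hfun] at htot
  refine htot.congr_deriv ?_
  rw [nPDF_even η _ hη, nPDF_even η _ hη]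
  have hkey := key_identity f k v hf hk hv
  linear_combination (η * η * B * D) * hkey


/-- For every `k > 0`, the map `k ↦ V_B(f, k)` is twice differentiable at
`k` with second derivative `(B/(k·v))·φ(d_2(f, k))`; equivalently, the map
`k ↦ −η·B·Φ(η·d_2(f, k))` has derivative `(B/(k·v))·φ(d_2(f, k))` at `k`. -/
theorem statement16 (f k v B η : ℝ) (hf : 0 < f) (hk : 0 < k) (hv : 0 < v) (hB : 0 < B)
    (hη : η = 1 ∨ η = -1) :
    HasDerivAt (deriv (fun x : ℝ => blackFormula v B η f x))
        (B / (k * v) * nPDF (dTwo v f k)) k ∧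
      HasDerivAt (fun x : ℝ => -η * B * nCDF (η * dTwo v f x))
        (B / (k * v) * nPDF (dTwo v f k)) k := by
  set D : ℝ := -(1 / (k * v)) with hD
  have h2 : HasDerivAt (fun x => nCDF (η * dTwo v f x)) (nPDF (η * dTwo v f k) * (η * D)) k :=
    (hasDerivAt_nCDF _).comp k ((hasDerivAt_dTwo f k v hf hk hv).const_mul η)
  have hsnd : HasDerivAt (fun x : ℝ => -η * B * nCDF (η * dTwo v f x))
      (B / (k * v) * nPDF (dTwo v f k)) k := by
    have h := h2.const_mul (-η * B)
    refine h.congr_deriv ?_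
    rw [nPDF_even η _ hη]
    have hη2 : η * η = 1 := by rcases hη with h | h <;> rw [h] <;> norm_num
    rcases hη with h | h <;> subst h <;> simp only [hD] <;>
      field_simp <;> ring
  refine ⟨?_, hsnd⟩
  refine hsnd.congr_of_eventuallyEq ?_
  filter_upwards [eventually_gt_nhds hk] with x hx
  exact (black_first_deriv f x v B η hf hx hv hη).deriv
end
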